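/- Suppose m ≥ 2 and b_c (c = 1, …, m) are real numbers such that λ_{abc} = g_{ab} b_c is totally symmetric in a, b, c, where g_{ab} is a positive definite symmetric m×m matrix. Then b_c = 0 for all c. -/

import Mathlib

/-- If `m ≥ 2`, `g` is positive definite symmetric `m×m`, and
`λ_{abc} = g_{ab} b_c` is totally symmetric in `a, b, c`, then `b = 0`. -/
theorem totally_symmetric_forces_zero {m : ℕ} (hm : 2 ≤ m)
    (g : Matrix (Fin m) (Fin m) ℝ) (hg : g.PosDef)
    (b : Fin m → ℝ)
    (hsym : ∀ a c d : Fin m,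
      g a c * b d = g c d * b a ∧ g c d * b a = g d a * b c) :
    b = 0 := by
  by_contra hb
  obtain ⟨a, ha⟩ := Function.ne_iff.mp hb
  simp only [Pi.zero_apply] at ha
  haveI : Nontrivial (Fin m) := Fin.nontrivial_iff_two_le.mpr hm
  obtain ⟨a', ha'⟩ := exists_ne a
  set x : Fin m → ℝ := fun i => if i = a then b a' else if i = a' then -b a else 0 with hxdef
  have hx0 : x ≠ 0 := by
    intro h
    have := congrFun h a'
    simp [hxdef, ha'] at this
    exact ha this
  have hpos := hg.dotProduct_mulVec_pos hx0
  have hform : dotProduct (star x) (g.mulVec x) = 0 := by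
    have hmv : ∀ c, (g.mulVec x) c = g c a * b a' - g c a' * b a := by
      intro c
      simp only [Matrix.mulVec, dotProduct, hxdef]
      rw [Finset.sum_eq_add_of_mem a a' (Finset.mem_univ _) (Finset.mem_univ _) (Ne.symm ha')]
      · simp [ha', Ne.symm ha']; ring
      · intro d _ hd
        simp [hd.1, hd.2]
    have hsum : dotProduct (star x) (g.mulVec x) = x a * (g.mulVec x) a + x a' * (g.mulVec x) a' := by
      simp only [dotProduct, star_trivial]
      rw [Finset.sum_eq_add_of_mem a a' (Finset.mem_univ _) (Finset.mem_univ _) (Ne.symm ha')]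
      intro d _ hd
      simp [hxdef, hd.1, hd.2]
    rw [hsum, hmv, hmv]
    have h1 : g a a * b a' = g a a' * b a := (hsym a a a').1
    have h2 : g a' a' * b a = g a' a * b a' := (hsym a' a' a).1
    have h3 : g a' a * b a' = g a a' * b a' := by
      have := (hsym a' a a').2
      linarith [(hsym a a' a').1, (hsym a' a a').1]
    simp only [hxdef]
    simp [ha', Ne.symm ha']
    linear_combination b a' * h1 + b a * h2
  rw [hform] at hpos
  exact lt_irrefl 0 hpos
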